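/- If f is a local holomorphic solution of f'' = (f')²/f - f'/x + 4f³ - 4/f near x₀ ∈ ℂ* with f(x₀) = 0 and Taylor expansion f(x) = a₁(x-x₀) + a₂(x-x₀)² + a₃(x-x₀)³ + ⋯, then a₁ = ±2 and a₂ = a₁/(2x₀). -/

import Mathlib

open Complex

/-- If `f` is a local holomorphic solution of `P_III(0,0,4,-4)` near `x₀ ∈ ℂ*`
(the equation being taken in the form `x·f·f'' = x·(f')² - f·f' + 4x·f⁴ - 4x`,
valid near `x₀`) with `f(x₀) = 0` and Taylor expansion
`f(x) = a₁(x-x₀) + a₂(x-x₀)² + ⋯`, then `a₁ = ±2` and `a₂ = a₁/(2x₀)`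
(equivalently `f''(x₀) = f'(x₀)/x₀`). -/

private lemma analyticAt_deriv {g : ℂ → ℂ} {x : ℂ} (hg : AnalyticAt ℂ g x) :
    AnalyticAt ℂ (deriv g) x := by
  have h := ((ContinuousLinearMap.apply ℂ ℂ (1 : ℂ)).analyticAt
      (fderiv ℂ g x)).comp hg.fderiv
  have : (fun y => fderiv ℂ g y 1) = deriv g := by
    ext y; exact fderiv_apply_one_eq_deriv
  rw [← this]; exact h

theorem stmt11 (f : ℂ → ℂ) (x₀ : ℂ) (hx₀ : x₀ ≠ 0)
    (hf : AnalyticAt ℂ f x₀) (h0 : f x₀ = 0)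
    (hode : ∀ᶠ x in nhds x₀,
      x * f x * iteratedDeriv 2 f x =
        x * (deriv f x) ^ 2 - f x * deriv f x + 4 * x * (f x) ^ 4 - 4 * x) :
    (deriv f x₀ = 2 ∨ deriv f x₀ = -2) ∧
      iteratedDeriv 2 f x₀ = deriv f x₀ / x₀ := by
  have h2 : iteratedDeriv 2 f = deriv (deriv f) := by
    ext x
    simp [iteratedDeriv_succ, iteratedDeriv_one]
  set A := deriv f x₀ with hA
  set B := deriv (deriv f) x₀ with hB
  -- Step 1: evaluate the ODE at x₀
  have heq0 := hode.self_of_nhds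
  rw [h0] at heq0
  have hA2 : A ^ 2 = 4 := by
    have hx : x₀ * (A ^ 2 - 4) = 0 := by linear_combination -heq0
    rcases mul_eq_zero.mp hx with h | h
    · exact absurd h hx₀
    · linear_combination h
  have hAne : A ≠ 0 := by
    intro h
    rw [h] at hA2
    norm_num at hA2
  -- Differentiability facts
  have hfd : HasDerivAt f A x₀ := hf.differentiableAt.hasDerivAt
  have hf1 : AnalyticAt ℂ (deriv f) x₀ := analyticAt_deriv hf
  have hfd2 : HasDerivAt (deriv f) B x₀ := hf1.differentiableAt.hasDerivAt
  have hf2a : AnalyticAt ℂ (deriv (deriv f)) x₀ := analyticAt_deriv hf1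
  set C := deriv (deriv (deriv f)) x₀ with hC
  have hfd3 : HasDerivAt (deriv (deriv f)) C x₀ := hf2a.differentiableAt.hasDerivAt
  -- Derivative of LHS
  have hL : HasDerivAt (fun x => x * f x * iteratedDeriv 2 f x)
      ((1 * f x₀ + x₀ * A) * deriv (deriv f) x₀ + x₀ * f x₀ * C) x₀ := by
    rw [h2]
    exact ((hasDerivAt_id' x₀).mul hfd).mul hfd3
  -- Derivative of RHS
  have hR : HasDerivAt
      (fun x => x * (deriv f x) ^ 2 - f x * deriv f x + 4 * x * (f x) ^ 4 - 4 * x)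
      ((1 * (deriv f x₀) ^ 2 + x₀ * ((2 : ℕ) * (deriv f x₀) ^ 1 * B))
        - (A * deriv f x₀ + f x₀ * B)
        + (((0 : ℂ) * x₀ + 4 * 1) * (f x₀) ^ 4 + (4 * x₀) * ((4 : ℕ) * (f x₀) ^ 3 * A))
        - 4 * 1) x₀ := by
    have h1 : HasDerivAt (fun x => x * (deriv f x) ^ 2)
        (1 * (deriv f x₀) ^ 2 + x₀ * ((2 : ℕ) * (deriv f x₀) ^ 1 * B)) x₀ :=
      (hasDerivAt_id' x₀).mul (hfd2.pow 2)
    have h2' : HasDerivAt (fun x => f x * deriv f x) (A * deriv f x₀ + f x₀ * B) x₀ :=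
      hfd.mul hfd2
    have h3 : HasDerivAt (fun x => 4 * x * (f x) ^ 4)
        (((0 : ℂ) * x₀ + 4 * 1) * (f x₀) ^ 4 + (4 * x₀) * ((4 : ℕ) * (f x₀) ^ 3 * A)) x₀ :=
      (((hasDerivAt_const x₀ (4 : ℂ)).mul (hasDerivAt_id' x₀)).mul (hfd.pow 4))
    have h4 : HasDerivAt (fun x : ℂ => 4 * x) (4 * 1) x₀ :=
      (hasDerivAt_id' x₀).const_mul 4
    exact ((h1.sub h2').add h3).sub h4
  -- Equate the derivatives via the eventual equality
  have hLR : HasDerivAt (fun x => x * f x * iteratedDeriv 2 f x)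
      ((1 * (deriv f x₀) ^ 2 + x₀ * ((2 : ℕ) * (deriv f x₀) ^ 1 * B))
        - (A * deriv f x₀ + f x₀ * B)
        + (((0 : ℂ) * x₀ + 4 * 1) * (f x₀) ^ 4 + (4 * x₀) * ((4 : ℕ) * (f x₀) ^ 3 * A))
        - 4 * 1) x₀ :=
    hR.congr_of_eventuallyEq hode
  have key := hL.unique hLR
  rw [h0, ← hA, ← hB] at key
  push_cast at key
  -- key : x₀ * A * B = stuff; simplify
  have hkey : x₀ * A * B = 4 := by
    have : x₀ * A * B = A ^ 2 + 2 * (x₀ * A * B) - A ^ 2 - 4 := by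
      linear_combination key
    linear_combination -this
  constructor
  · have : (A - 2) * (A + 2) = 0 := by linear_combination hA2
    rcases mul_eq_zero.mp this with h | h
    · left; linear_combination h
    · right; linear_combination h
  · rw [h2, ← hB]
    field_simp
    -- goal : B * x₀ = A  (or similar)
    have h5 : A * (x₀ * B - A) = 0 := by linear_combination hkey - hA2
    rcases mul_eq_zero.mp h5 with h | h
    · exact absurd h hAne
    · linear_combination h
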